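/- (Koksma's inequality) Let F : [0,1] → ℝ be a function of bounded variation with total variation V(F), and let x_1, ..., x_N ∈ [0,1] with discrepancy D = sup_{I ⊆ [0,1] interval} |μ(I) − (1/N)|{n : x_n ∈ I}||. Then |∫₀¹ F(t) dt − (1/N) Σ_{n=1}^N F(x_n)| ≤ V(F) · D. -/

import Mathlib

open MeasureTheory Set

private lemma abs_sub_le_evar {F : ℝ → ℝ} {s : Set ℝ} (hfin : eVariationOn F s ≠ ⊤)
    {x y : ℝ} (hx : x ∈ s) (hy : y ∈ s) :
    |F x - F y| ≤ (eVariationOn F s).toReal := by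
  have h := eVariationOn.edist_le F hx hy
  have h2 := ENNReal.toReal_mono hfin h
  rwa [edist_dist, ENNReal.toReal_ofReal dist_nonneg, Real.dist_eq] at h2

private lemma chain_le (t : ℕ → ℝ) : ∀ n : ℕ, (∀ i < n, t i ≤ t (i + 1)) → t 0 ≤ t n := by
  intro n
  induction n with
  | zero => intro _; exact le_rfl
  | succ n ih =>
    intro h
    exact (ih fun i hi => h i (Nat.lt_succ_of_lt hi)).trans (h n (Nat.lt_succ_self n))

private lemma evar_chain (F : ℝ → ℝ) : ∀ (n : ℕ) (t : ℕ → ℝ), (∀ i < n, t i ≤ t (i + 1)) →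
    ∑ i ∈ Finset.range n, eVariationOn F (Icc (t i) (t (i + 1)))
      ≤ eVariationOn F (Icc (t 0) (t n)) := by
  intro n
  induction n with
  | zero => intro t _; simp
  | succ n ih =>
    intro t ht
    have h0n : t 0 ≤ t n := chain_le t n fun i hi => ht i (Nat.lt_succ_of_lt hi)
    have hnn : t n ≤ t (n + 1) := ht n (Nat.lt_succ_self n)
    have key := eVariationOn.Icc_add_Icc F (s := (Set.univ : Set ℝ)) h0n hnn (Set.mem_univ _)
    simp only [Set.univ_inter] at key
    rw [Finset.sum_range_succ, ← key]
    exact add_le_add (ih t fun i hi => ht i (Nat.lt_succ_of_lt hi)) le_rfl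

private lemma sum_evar_toReal_le (F : ℝ → ℝ) {n : ℕ} {t : ℕ → ℝ}
    (ht : ∀ i < n, t i ≤ t (i + 1))
    (hfin : eVariationOn F (Icc (t 0) (t n)) ≠ ⊤) :
    ∑ i ∈ Finset.range n, (eVariationOn F (Icc (t i) (t (i + 1)))).toReal
      ≤ (eVariationOn F (Icc (t 0) (t n))).toReal := by
  have hchain := evar_chain F n t ht
  have hfin' : ∀ i ∈ Finset.range n, eVariationOn F (Icc (t i) (t (i + 1))) ≠ ⊤ := by
    intro i hi
    refine ne_top_of_le_ne_top hfin (le_trans ?_ hchain)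
    exact Finset.single_le_sum (f := fun j => eVariationOn F (Icc (t j) (t (j + 1)))) (fun j _ => zero_le) hi
  rw [← ENNReal.toReal_sum hfin']
  exact ENNReal.toReal_mono hfin hchain

private lemma bv_intervalIntegrable {F : ℝ → ℝ} (hF : BoundedVariationOn F (Icc 0 1))
    {a b : ℝ} (ha : 0 ≤ a) (hab : a ≤ b) (hb : b ≤ 1) :
    IntervalIntegrable F volume a b := by
  obtain ⟨p, q, hp, hq, hpq⟩ :=
    hF.locallyBoundedVariationOn.exists_monotoneOn_sub_monotoneOn
  have hsub : Set.uIcc a b ⊆ Set.Icc (0 : ℝ) 1 := by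
    rw [Set.uIcc_of_le hab]; exact Set.Icc_subset_Icc ha hb
  have hip : IntervalIntegrable p volume a b := (hp.mono hsub).intervalIntegrable
  have hiq : IntervalIntegrable q volume a b := (hq.mono hsub).intervalIntegrable
  rw [hpq]
  exact hip.sub hiq

private lemma stieltjes_bound (F : ℝ → ℝ) (hF : BoundedVariationOn F (Icc 0 1))
    {a b c D : ℝ} (hab : a ≤ b) (ha : 0 ≤ a) (hb : b ≤ 1)
    (hc : ∀ t ∈ Icc a b, |c - t| ≤ D) :
    |(∫ t in a..b, F t) + (c - b) * F b - (c - a) * F a|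
      ≤ D * (eVariationOn F (Icc a b)).toReal := by
  set V := (eVariationOn F (Icc a b)).toReal with hVdef
  have hsub : Icc a b ⊆ Icc (0 : ℝ) 1 := Icc_subset_Icc ha hb
  have hVfin : eVariationOn F (Icc a b) ≠ ⊤ :=
    ne_top_of_le_ne_top hF (eVariationOn.mono F hsub)
  have hD0 : 0 ≤ D := (abs_nonneg _).trans (hc a ⟨le_rfl, hab⟩)
  have hV0 : 0 ≤ V := ENNReal.toReal_nonneg
  have main : ∀ n : ℕ, 1 ≤ n →
      |(∫ t in a..b, F t) + (c - b) * F b - (c - a) * F a|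
        ≤ D * V + ((b - a) / n) * V := by
    intro n hn
    have hn0 : (n : ℝ) ≠ 0 := Nat.cast_ne_zero.mpr (by omega)
    set δ := (b - a) / n with hδdef
    have hδ0 : 0 ≤ δ := div_nonneg (sub_nonneg.mpr hab) (Nat.cast_nonneg n)
    set t : ℕ → ℝ := fun i => a + (min i n : ℕ) * δ with htdef
    have ht0 : t 0 = a := by simp [htdef]
    have htn : t n = b := by
      show a + ((min n n : ℕ) : ℝ) * δ = b
      rw [min_self, hδdef]
      field_simp
      ring
    have hmono : Monotone t := by
      intro i j hij
      simp only [htdef]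
      have hcast : ((min i n : ℕ) : ℝ) ≤ ((min j n : ℕ) : ℝ) := by
        exact_mod_cast min_le_min hij (le_refl n)
      exact add_le_add_right (mul_le_mul_of_nonneg_right hcast hδ0) a
    have hnδ : (n : ℝ) * δ = b - a := by
      rw [hδdef]; field_simp
    have hmem : ∀ i, t i ∈ Icc a b := by
      intro i
      simp only [htdef, Set.mem_Icc]
      have h1 : ((min i n : ℕ) : ℝ) ≤ (n : ℝ) := by exact_mod_cast min_le_right i n
      have h2 : ((min i n : ℕ) : ℝ) * δ ≤ (n : ℝ) * δ := mul_le_mul_of_nonneg_right h1 hδ0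
      have h3 : (0 : ℝ) ≤ ((min i n : ℕ) : ℝ) * δ := by positivity
      constructor <;> linarith
    have hstep : ∀ i < n, t (i + 1) = t i + δ := by
      intro i hi
      simp only [htdef]
      rw [min_eq_left (by omega : i + 1 ≤ n), min_eq_left (by omega : i ≤ n)]
      push_cast; ring
    -- bound on the Stieltjes sums
    have hsumedist : ∑ i ∈ Finset.range n, |F (t (i + 1)) - F (t i)| ≤ V := by
      have h1 : ENNReal.ofReal (∑ i ∈ Finset.range n, |F (t (i + 1)) - F (t i)|)
          ≤ eVariationOn F (Icc a b) := by
        rw [ENNReal.ofReal_sum_of_nonneg (fun i _ => abs_nonneg _)]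
        refine le_trans (le_of_eq ?_) (eVariationOn.sum_le (f := F) (n := n) hmono hmem)
        refine Finset.sum_congr rfl fun i _ => ?_
        rw [edist_dist, Real.dist_eq]
      calc ∑ i ∈ Finset.range n, |F (t (i + 1)) - F (t i)|
          = (ENNReal.ofReal (∑ i ∈ Finset.range n, |F (t (i + 1)) - F (t i)|)).toReal := by
            rw [ENNReal.toReal_ofReal (Finset.sum_nonneg fun i _ => abs_nonneg _)]
        _ ≤ V := ENNReal.toReal_mono hVfin h1
    have hSS : |∑ i ∈ Finset.range n, (c - t i) * (F (t (i + 1)) - F (t i))| ≤ D * V := by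
      calc |∑ i ∈ Finset.range n, (c - t i) * (F (t (i + 1)) - F (t i))|
          ≤ ∑ i ∈ Finset.range n, |(c - t i) * (F (t (i + 1)) - F (t i))| :=
            Finset.abs_sum_le_sum_abs _ _
        _ ≤ ∑ i ∈ Finset.range n, D * |F (t (i + 1)) - F (t i)| := by
            refine Finset.sum_le_sum fun i _ => ?_
            rw [abs_mul]
            exact mul_le_mul_of_nonneg_right (hc _ (hmem i)) (abs_nonneg _)
        _ = D * ∑ i ∈ Finset.range n, |F (t (i + 1)) - F (t i)| := by rw [Finset.mul_sum]
        _ ≤ D * V := mul_le_mul_of_nonneg_left hsumedist hD0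
    -- algebraic identity
    have hid : (∫ s in a..b, F s) + (c - b) * F b - (c - a) * F a
        = (∑ i ∈ Finset.range n, (c - t i) * (F (t (i + 1)) - F (t i)))
          + ((∫ s in a..b, F s) - ∑ i ∈ Finset.range n, δ * F (t (i + 1))) := by
      have hSSeq : ∑ i ∈ Finset.range n, (c - t i) * (F (t (i + 1)) - F (t i))
          = ((c - t n) * F (t n) - (c - t 0) * F (t 0))
            + ∑ i ∈ Finset.range n, δ * F (t (i + 1)) := by
        rw [← Finset.sum_range_sub (fun i => (c - t i) * F (t i)) n, ← Finset.sum_add_distrib]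
        refine Finset.sum_congr rfl fun i hi => ?_
        rw [hstep i (Finset.mem_range.mp hi)]
        ring
      rw [hSSeq, ht0, htn]; ring
    -- error bound for Riemann sums
    have hint : ∀ i < n, IntervalIntegrable F volume (t i) (t (i + 1)) := fun i _ =>
      bv_intervalIntegrable hF (le_trans ha (hmem i).1) (hmono (Nat.le_succ i))
        (le_trans (hmem (i + 1)).2 hb)
    have hsplit : ∫ s in a..b, F s = ∑ i ∈ Finset.range n, ∫ u in t i..t (i + 1), F u := by
      rw [intervalIntegral.sum_integral_adjacent_intervals hint, ht0, htn]
    have hsumV : ∑ i ∈ Finset.range n, (eVariationOn F (Icc (t i) (t (i + 1)))).toReal ≤ V := by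
      have hfin' : eVariationOn F (Icc (t 0) (t n)) ≠ ⊤ := by rw [ht0, htn]; exact hVfin
      have := sum_evar_toReal_le F (fun i _ => hmono (Nat.le_succ i)) hfin'
      rwa [ht0, htn] at this
    have hE : |(∫ s in a..b, F s) - ∑ i ∈ Finset.range n, δ * F (t (i + 1))| ≤ δ * V := by
      rw [hsplit, ← Finset.sum_sub_distrib]
      calc |∑ i ∈ Finset.range n, ((∫ u in t i..t (i + 1), F u) - δ * F (t (i + 1)))|
          ≤ ∑ i ∈ Finset.range n, |(∫ u in t i..t (i + 1), F u) - δ * F (t (i + 1))| :=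
            Finset.abs_sum_le_sum_abs _ _
        _ ≤ ∑ i ∈ Finset.range n, δ * (eVariationOn F (Icc (t i) (t (i + 1)))).toReal := by
            refine Finset.sum_le_sum fun i hi => ?_
            have hi' := Finset.mem_range.mp hi
            have hle : t i ≤ t (i + 1) := hmono (Nat.le_succ i)
            have hVifin : eVariationOn F (Icc (t i) (t (i + 1))) ≠ ⊤ :=
              ne_top_of_le_ne_top hVfin
                (eVariationOn.mono F (Icc_subset_Icc (hmem i).1 (hmem (i + 1)).2))
            have heq : (∫ u in t i..t (i + 1), F u) - δ * F (t (i + 1))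
                = ∫ u in t i..t (i + 1), (F u - F (t (i + 1))) := by
              rw [intervalIntegral.integral_sub (hint i hi') intervalIntegrable_const,
                intervalIntegral.integral_const, hstep i hi', smul_eq_mul]
              ring
            rw [heq]
            have hbnd : ∀ u ∈ Set.uIoc (t i) (t (i + 1)),
                ‖F u - F (t (i + 1))‖ ≤ (eVariationOn F (Icc (t i) (t (i + 1)))).toReal := by
              intro u hu
              rw [Set.uIoc_of_le hle] at hu
              exact abs_sub_le_evar hVifin (Set.Ioc_subset_Icc_self hu)
                (Set.right_mem_Icc.mpr hle)
            have hnorm := intervalIntegral.norm_integral_le_of_norm_le_const hbnd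
            rw [Real.norm_eq_abs] at hnorm
            have habs : |t (i + 1) - t i| = δ := by
              rw [hstep i hi']; simp [abs_of_nonneg hδ0]
            calc |∫ u in t i..t (i + 1), (F u - F (t (i + 1)))|
                ≤ (eVariationOn F (Icc (t i) (t (i + 1)))).toReal * |t (i + 1) - t i| := hnorm
              _ = δ * (eVariationOn F (Icc (t i) (t (i + 1)))).toReal := by
                  rw [habs]; ring
        _ = δ * ∑ i ∈ Finset.range n, (eVariationOn F (Icc (t i) (t (i + 1)))).toReal := by
            rw [Finset.mul_sum]
        _ ≤ δ * V := mul_le_mul_of_nonneg_left hsumV hδ0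
    rw [hid]
    exact (abs_add_le _ _).trans (add_le_add hSS hE)
  have htend : Filter.Tendsto (fun n : ℕ => D * V + ((b - a) / n) * V)
      Filter.atTop (nhds (D * V)) := by
    have h1 : Filter.Tendsto (fun n : ℕ => (b - a) / n) Filter.atTop (nhds 0) :=
      tendsto_const_div_atTop_nhds_zero_nat (b - a)
    have h2 := h1.mul_const V
    rw [zero_mul] at h2
    simpa using tendsto_const_nhds.add h2
  exact ge_of_tendsto htend (Filter.eventually_atTop.mpr ⟨1, fun n hn => main n hn⟩)

open MeasureTheory in
/-- Koksma's inequality: if `F : [0,1] → ℝ` has bounded variation with total variation `V(F)`,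
and `x₁, …, x_N ∈ [0,1]` have discrepancy at most `D` (i.e. for every subinterval
`I ⊆ [0,1]`, `|μ(I) − (1/N)·#{n : x_n ∈ I}| ≤ D`), then
`|∫₀¹ F − (1/N) Σ F(x_n)| ≤ V(F)·D`. -/
theorem koksma_inequality (F : ℝ → ℝ) (hF : BoundedVariationOn F (Set.Icc 0 1))
    (N : ℕ) (hN : 1 ≤ N) (x : Fin N → ℝ) (hx : ∀ n, x n ∈ Set.Icc (0 : ℝ) 1)
    (D : ℝ) (hD : 0 ≤ D)
    (hdisc : ∀ I : Set ℝ, I ⊆ Set.Icc 0 1 → I.OrdConnected →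
      |(volume I).toReal - (1 / (N : ℝ)) * (Nat.card {n : Fin N // x n ∈ I} : ℝ)| ≤ D) :
    |(∫ t in (0:ℝ)..1, F t) - (1 / (N : ℝ)) * ∑ n : Fin N, F (x n)|
      ≤ (eVariationOn F (Set.Icc 0 1)).toReal * D := by
  classical
  have hN0 : (0 : ℝ) < N := by exact_mod_cast hN
  set σ := Tuple.sort x with hσdef
  set y : Fin N → ℝ := fun n => x (σ n) with hydef
  have hymono : Monotone y := Tuple.monotone_sort x
  have hy01 : ∀ n, y n ∈ Set.Icc (0 : ℝ) 1 := fun n => hx _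
  have hsum : ∑ n : Fin N, F (x n) = ∑ n : Fin N, F (y n) :=
    (Equiv.sum_comp σ (fun n => F (x n))).symm
  have hdisc' : ∀ I : Set ℝ, I ⊆ Set.Icc 0 1 → I.OrdConnected →
      |(volume I).toReal - (1 / (N : ℝ)) * (Nat.card {n : Fin N // y n ∈ I} : ℝ)| ≤ D := by
    intro I hI hOC
    have hcard : Nat.card {n : Fin N // y n ∈ I} = Nat.card {n : Fin N // x n ∈ I} :=
      Nat.card_congr (σ.subtypeEquiv fun n => Iff.rfl)
    rw [hcard]
    exact hdisc I hI hOC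
  set z : ℕ → ℝ := fun i =>
    if h : 1 ≤ i ∧ i ≤ N then y ⟨i - 1, by omega⟩ else if i = 0 then 0 else 1 with hzdef
  have hz0 : z 0 = 0 := by simp [hzdef]
  have hzN1 : z (N + 1) = 1 := by
    simp only [hzdef]
    rw [dif_neg (by omega), if_neg (by omega)]
  have hzmid : ∀ i, ∀ (h1 : 1 ≤ i) (h2 : i ≤ N), z i = y ⟨i - 1, by omega⟩ := by
    intro i h1 h2
    simp only [hzdef]
    rw [dif_pos ⟨h1, h2⟩]
  have hzstep : ∀ i, i < N + 1 → z i ≤ z (i + 1) := by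
    intro i hi
    rcases Nat.eq_zero_or_pos i with h0 | h1
    · subst h0
      rw [hz0, hzmid 1 le_rfl hN]
      exact (hy01 _).1
    · rcases Nat.lt_or_ge (i + 1) (N + 1) with h2 | h2
      · rw [hzmid i h1 (by omega), hzmid (i + 1) (by omega) (by omega)]
        exact hymono (by simp only [Fin.mk_le_mk]; omega)
      · have hiN : i = N := by omega
        have hz1 : z (i + 1) = 1 := by rw [hiN, hzN1]
        rw [hzmid i h1 (by omega), hz1]
        exact (hy01 _).2
  have hz01 : ∀ i, i ≤ N + 1 → z i ∈ Set.Icc (0 : ℝ) 1 := by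
    intro i hi
    rcases Nat.eq_zero_or_pos i with h0 | h1
    · subst h0; rw [hz0]; exact ⟨le_rfl, zero_le_one⟩
    · rcases Nat.lt_or_ge i (N + 1) with h2 | h2
      · rw [hzmid i h1 (by omega)]
        exact hy01 _
      · have : i = N + 1 := by omega
        subst this
        rw [hzN1]
        exact ⟨zero_le_one, le_rfl⟩
  have hlow : ∀ i, 1 ≤ i → i ≤ N → (i : ℝ) / N - D ≤ z i := by
    intro i h1 h2
    have hzi := hz01 i (by omega)
    have hI : Set.Icc (0 : ℝ) (z i) ⊆ Set.Icc 0 1 := Set.Icc_subset_Icc le_rfl hzi.2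
    have hd := hdisc' (Set.Icc 0 (z i)) hI Set.ordConnected_Icc
    have hvol : (volume (Set.Icc (0 : ℝ) (z i))).toReal = z i := by
      rw [Real.volume_Icc, ENNReal.toReal_ofReal (by linarith [hzi.1])]
      ring
    rw [hvol] at hd
    have hcount : (i : ℝ) ≤ (Nat.card {n : Fin N // y n ∈ Set.Icc 0 (z i)} : ℝ) := by
      have hinj : Function.Injective (fun k : Fin i =>
          (⟨⟨k.1, by omega⟩, ⟨(hy01 _).1, by
            rw [hzmid i h1 h2]
            exact hymono (by simp only [Fin.mk_le_mk]; omega)⟩⟩ :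
            {n : Fin N // y n ∈ Set.Icc 0 (z i)})) := by
        intro k1 k2 hk
        simp only [Subtype.mk.injEq, Fin.mk.injEq] at hk
        exact Fin.ext (congrArg (fun p => p.1.1) hk)
      have hle := Nat.card_le_card_of_injective _ hinj
      have hicard : Nat.card (Fin i) = i := by simp
      rw [hicard] at hle
      exact_mod_cast hle
    have h3 := (abs_le.mp hd).1
    have h4 : (1 : ℝ) / N * i ≤ 1 / N
        * (Nat.card {n : Fin N // y n ∈ Set.Icc 0 (z i)} : ℝ) :=
      mul_le_mul_of_nonneg_left hcount (by positivity)
    have h5 : (i : ℝ) / N = 1 / N * i := by ring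
    linarith
  have hhigh : ∀ i, i ≤ N → z (i + 1) ≤ (i : ℝ) / N + D := by
    intro i hi
    rcases Nat.lt_or_ge i N with h2 | h2
    · have hw := hzmid (i + 1) (by omega) (by omega)
      have hw01 : z (i + 1) ∈ Set.Icc (0 : ℝ) 1 := hz01 (i + 1) (by omega)
      have hI : Set.Ico (0 : ℝ) (z (i + 1)) ⊆ Set.Icc 0 1 :=
        Set.Ico_subset_Icc_self.trans (Set.Icc_subset_Icc le_rfl hw01.2)
      have hd := hdisc' (Set.Ico 0 (z (i + 1))) hI Set.ordConnected_Ico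
      have hvol : (volume (Set.Ico (0 : ℝ) (z (i + 1)))).toReal = z (i + 1) := by
        rw [Real.volume_Ico, ENNReal.toReal_ofReal (by linarith [hw01.1])]
        ring
      rw [hvol] at hd
      have hcount : (Nat.card {n : Fin N // y n ∈ Set.Ico 0 (z (i + 1))} : ℝ) ≤ i := by
        have hinj : Function.Injective (fun k : {n : Fin N // y n ∈ Set.Ico 0 (z (i + 1))} =>
            (⟨k.1.1, by
              by_contra hc
              push_neg at hc
              have hge : z (i + 1) ≤ y k.1 :=
                hw.trans_le (hymono (by simp [Fin.le_def]; omega))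
              exact absurd k.2.2 (not_lt.mpr hge)⟩ : Fin i)) := by
          intro k1 k2 hk
          simp only [Fin.mk.injEq] at hk
          exact Subtype.ext (Fin.ext hk)
        have hle := Nat.card_le_card_of_injective _ hinj
        have hicard : Nat.card (Fin i) = i := by simp
        rw [hicard] at hle
        exact_mod_cast hle
      have h3 := (abs_le.mp hd).2
      have h4 : (1 : ℝ) / N * (Nat.card {n : Fin N // y n ∈ Set.Ico 0 (z (i + 1))} : ℝ)
          ≤ 1 / N * i := mul_le_mul_of_nonneg_left hcount (by positivity)
      have h5 : (i : ℝ) / N = 1 / N * i := by ring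
      linarith
    · have hiN : i = N := le_antisymm hi h2
      rw [hiN, hzN1, div_self (ne_of_gt hN0)]
      linarith
  have hct : ∀ i, i ≤ N → ∀ u ∈ Set.Icc (z i) (z (i + 1)), |(i : ℝ) / N - u| ≤ D := by
    intro i hi u hu
    rw [abs_le]
    constructor
    · have := hhigh i hi
      have := hu.2
      linarith
    · rcases Nat.eq_zero_or_pos i with h0 | h1
      · subst h0
        have h6 := hu.1
        rw [hz0] at h6
        simp only [Nat.cast_zero, zero_div]
        linarith
      · have := hlow i h1 hi
        have := hu.1
        linarith
  have hint : ∀ k, k < N + 1 → IntervalIntegrable F volume (z k) (z (k + 1)) := fun k hk =>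
    bv_intervalIntegrable hF (hz01 k (by omega)).1 (hzstep k hk) (hz01 (k + 1) (by omega)).2
  have hsplit : ∑ i ∈ Finset.range (N + 1), ∫ u in z i..z (i + 1), F u
      = ∫ t in (0 : ℝ)..1, F t := by
    rw [intervalIntegral.sum_integral_adjacent_intervals hint, hz0, hzN1]
  have hteleF : ∑ i ∈ Finset.range N, F (z (i + 1)) = ∑ n : Fin N, F (y n) := by
    rw [Finset.sum_range fun i => F (z (i + 1))]
    refine Finset.sum_congr rfl fun i _ => ?_
    rw [hzmid (i.1 + 1) (by omega) (by omega)]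
    exact congrArg (fun a => F (y a)) (Fin.ext (by simp))
  set g : ℕ → ℝ := fun i => ((i : ℝ) / N - z i) * F (z i) with hgdef
  have hheart : ∑ i ∈ Finset.range (N + 1),
      (((i : ℝ) / N - z (i + 1)) * F (z (i + 1)) - ((i : ℝ) / N - z i) * F (z i))
      = -(1 / (N : ℝ)) * ∑ n : Fin N, F (y n) := by
    have h1 : ∀ i ∈ Finset.range (N + 1),
        ((i : ℝ) / N - z (i + 1)) * F (z (i + 1)) - ((i : ℝ) / N - z i) * F (z i)
        = (g (i + 1) - g i) - (1 / (N : ℝ)) * F (z (i + 1)) := by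
      intro i _
      simp only [hgdef]
      push_cast
      ring
    rw [Finset.sum_congr rfl h1, Finset.sum_sub_distrib, Finset.sum_range_sub g]
    have hg0 : g 0 = 0 := by simp [hgdef, hz0]
    have hgN1 : g (N + 1) = (1 / (N : ℝ)) * F 1 := by
      simp only [hgdef, hzN1]
      push_cast
      field_simp
      ring
    have hlast : ∑ i ∈ Finset.range (N + 1), (1 / (N : ℝ)) * F (z (i + 1))
        = (1 / (N : ℝ)) * (∑ n : Fin N, F (y n) + F 1) := by
      rw [← Finset.mul_sum, Finset.sum_range_succ, hteleF, hzN1]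
    rw [hg0, hgN1, hlast]
    ring
  have hTeq : (∫ t in (0 : ℝ)..1, F t) - (1 / (N : ℝ)) * ∑ n : Fin N, F (x n)
      = ∑ i ∈ Finset.range (N + 1), ((∫ u in z i..z (i + 1), F u)
          + ((i : ℝ) / N - z (i + 1)) * F (z (i + 1)) - ((i : ℝ) / N - z i) * F (z i)) := by
    have hsplit2 : ∀ i ∈ Finset.range (N + 1), (∫ u in z i..z (i + 1), F u)
          + ((i : ℝ) / N - z (i + 1)) * F (z (i + 1)) - ((i : ℝ) / N - z i) * F (z i)
        = (∫ u in z i..z (i + 1), F u)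
          + (((i : ℝ) / N - z (i + 1)) * F (z (i + 1))
              - ((i : ℝ) / N - z i) * F (z i)) := fun i _ => by ring
    rw [Finset.sum_congr rfl hsplit2, Finset.sum_add_distrib, hsplit, hheart, hsum]
    ring
  rw [hTeq]
  calc |∑ i ∈ Finset.range (N + 1), ((∫ u in z i..z (i + 1), F u)
          + ((i : ℝ) / N - z (i + 1)) * F (z (i + 1)) - ((i : ℝ) / N - z i) * F (z i))|
      ≤ ∑ i ∈ Finset.range (N + 1), |(∫ u in z i..z (i + 1), F u)
          + ((i : ℝ) / N - z (i + 1)) * F (z (i + 1)) - ((i : ℝ) / N - z i) * F (z i)| :=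
        Finset.abs_sum_le_sum_abs _ _
    _ ≤ ∑ i ∈ Finset.range (N + 1),
          D * (eVariationOn F (Set.Icc (z i) (z (i + 1)))).toReal := by
        refine Finset.sum_le_sum fun i hi => ?_
        have hi' := Finset.mem_range.mp hi
        exact stieltjes_bound F hF (hzstep i hi') (hz01 i (by omega)).1
          (hz01 (i + 1) (by omega)).2 (hct i (by omega))
    _ = D * ∑ i ∈ Finset.range (N + 1),
          (eVariationOn F (Set.Icc (z i) (z (i + 1)))).toReal := by
        rw [Finset.mul_sum]
    _ ≤ D * (eVariationOn F (Set.Icc 0 1)).toReal := by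
        refine mul_le_mul_of_nonneg_left ?_ hD
        have hfin' : eVariationOn F (Set.Icc (z 0) (z (N + 1))) ≠ ⊤ := by
          rw [hz0, hzN1]; exact hF
        have := sum_evar_toReal_le F (fun i hi => hzstep i hi) hfin'
        rwa [hz0, hzN1] at this
    _ = (eVariationOn F (Set.Icc 0 1)).toReal * D := mul_comm _ _
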